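/- arXiv:1308.3860 — 2 statements merged into one kernel-verified Lean document; each statement's English description precedes it below -/
import Mathlib

section
/- Let p, q, r be positive integers and let M_{p,q,r} = ∑_{i=1}^p ∑_{j=1}^q ∑_{k=1}^r e_{i,j} ⊗ e_{j,k} ⊗ e_{k,i} ∈ ℂ^{p×q} ⊗ ℂ^{q×r} ⊗ ℂ^{r×p} be the matrix multiplication tensor. Then ‖M_{p,q,r}‖_⋆ = pqr and [M_{p,q,r}] = 1. -/
noncomputable section

open Finset

/-- The third-order tensor space `A ⊗ B ⊗ C` (spaces given by orthonormal bases indexed by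
`A`, `B`, `C`), modeled as `EuclideanSpace ℂ (A × B × C)`. -/
abbrev T3 (A B C : Type*) [Fintype A] [Fintype B] [Fintype C] : Type _ :=
  EuclideanSpace ℂ (A × B × C)

variable {A B C : Type*} [Fintype A] [Fintype B] [Fintype C]

/-- The pure tensor `a ⊗ b ⊗ c`. -/
def pure3 (a : A → ℂ) (b : B → ℂ) (c : C → ℂ) : T3 A B C :=
  WithLp.toLp 2 (fun x => a x.1 * b x.2.1 * c x.2.2)

/-- A pure tensor in `A ⊗ B ⊗ C`. -/
def IsPure3 (T : T3 A B C) : Prop :=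
  ∃ (a : A → ℂ) (b : B → ℂ) (c : C → ℂ), ∀ x : A × B × C, T x = a x.1 * b x.2.1 * c x.2.2

/-- Nuclear norm of a tensor. -/
def nuclearNorm3 (T : T3 A B C) : ℝ :=
  sInf {c : ℝ | ∃ (r : ℕ) (v : Fin r → T3 A B C),
    (∀ i, IsPure3 (v i)) ∧ T = ∑ i, v i ∧ c = ∑ i, ‖v i‖}

/-- `[S]_α`. -/
def bracket3 {κ : Type*} [Fintype κ] (S : κ → T3 A B C) (α : ℝ) : ℝ :=
  sSup {c : ℝ | ∃ u : T3 A B C, IsPure3 u ∧ ‖u‖ = 1 ∧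
    c = (∑ i, ‖(inner ℂ (S i) u : ℂ)‖ ^ α) ^ (1 / α)}

/-- The spectral norm `[T]`. -/
def spectral3 (T : T3 A B C) : ℝ :=
  sSup {c : ℝ | ∃ u : T3 A B C, IsPure3 u ∧ ‖u‖ = 1 ∧ c = ‖(inner ℂ T u : ℂ)‖}

/-- `t`-orthogonality of a tuple of unit tensors. -/
def TOrtho3 {κ : Type*} [Fintype κ] (S : κ → T3 A B C) (t : ℝ) : Prop :=
  (∀ i, ‖S i‖ = 1) ∧ bracket3 S (2 / t) = 1

/-- A diagonal singular value decomposition of `T`: `T = ∑ i, σ i • v i` where all `σ i > 0`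
and `(v i)` is a `2`-orthogonal family of pure tensors of unit length.  (The singular values
of `T` are the `σ i`, with multiplicities.) -/
def IsDSVD3 {κ : Type*} [Fintype κ] (T : T3 A B C) (σ : κ → ℝ) (v : κ → T3 A B C) : Prop :=
  (∀ i, 0 < σ i) ∧ (∀ i, IsPure3 (v i)) ∧ TOrtho3 v 2 ∧ T = ∑ i, (σ i : ℂ) • v i

/-- The standard basis vector `e_a`. -/
def std {A : Type*} [DecidableEq A] (a : A) : A → ℂ := fun x => if x = a then 1 else 0

/-- The matrix multiplication tensor
`M_{p,q,r} = ∑_{i,j,k} e_{i,j} ⊗ e_{j,k} ⊗ e_{k,i} ∈ ℂ^{p×q} ⊗ ℂ^{q×r} ⊗ ℂ^{r×p}`. -/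
def matMulTensor (p q r : ℕ) : T3 (Fin p × Fin q) (Fin q × Fin r) (Fin r × Fin p) :=
  ∑ i : Fin p, ∑ j : Fin q, ∑ k : Fin r,
    pure3 (std (i, j)) (std (j, k)) (std (k, i))

lemma T3.sum_apply {ι : Type*} (s : Finset ι) (f : ι → T3 A B C) (x : A × B × C) :
    (∑ i ∈ s, f i) x = ∑ i ∈ s, f i x := by
  classical
  induction s using Finset.cons_induction with
  | empty => rfl
  | cons a s ha ih => rw [Finset.sum_cons, Finset.sum_cons, ← ih]; rfl

lemma inner_std_pure3 [DecidableEq A] [DecidableEq B] [DecidableEq C]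
    (a0 : A) (b0 : B) (c0 : C) (u : T3 A B C) :
    (inner ℂ (pure3 (std a0) (std b0) (std c0)) u : ℂ) = u (a0, b0, c0) := by
  simp only [PiLp.inner_apply, RCLike.inner_apply, pure3, std]
  have h : ∀ x : A × B × C,
      u x * (starRingEnd ℂ) ((if x.1 = a0 then 1 else 0) * (if x.2.1 = b0 then 1 else 0) *
        (if x.2.2 = c0 then (1:ℂ) else 0)) = if x = (a0, b0, c0) then u x else 0 := by
    rintro ⟨x1, x2, x3⟩
    by_cases h1 : x1 = a0 <;> by_cases h2 : x2 = b0 <;> by_cases h3 : x3 = c0 <;>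
      simp [h1, h2, h3, Prod.ext_iff]
  rw [Finset.sum_congr rfl (fun x _ => h x), Finset.sum_ite_eq' Finset.univ (a0, b0, c0)]
  simp

lemma norm_pure3 (a : A → ℂ) (b : B → ℂ) (c : C → ℂ) :
    ‖(pure3 a b c : T3 A B C)‖ =
      Real.sqrt ((∑ x, ‖a x‖ ^ 2) * (∑ y, ‖b y‖ ^ 2) * (∑ z, ‖c z‖ ^ 2)) := by
  rw [EuclideanSpace.norm_eq]
  congr 1
  have : ∀ x : A × B × C, ‖(pure3 a b c : T3 A B C) x‖ ^ 2
      = ‖a x.1‖ ^ 2 * ‖b x.2.1‖ ^ 2 * ‖c x.2.2‖ ^ 2 := by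
    intro x
    change ‖a x.1 * b x.2.1 * c x.2.2‖ ^ 2 = _
    rw [norm_mul, norm_mul, mul_pow, mul_pow]
  rw [Finset.sum_congr rfl (fun x _ => this x)]
  rw [Fintype.sum_prod_type]
  simp only [Fintype.sum_prod_type]
  conv_rhs => rw [Finset.sum_mul_sum, Finset.sum_mul]
  refine Finset.sum_congr rfl fun x _ => ?_
  rw [Finset.sum_mul_sum]

lemma cs_complex {ι : Type*} [Fintype ι] (f g : ι → ℂ) :
    ‖∑ i, f i * g i‖ ≤ Real.sqrt (∑ i, ‖f i‖ ^ 2) * Real.sqrt (∑ i, ‖g i‖ ^ 2) := by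
  calc ‖∑ i, f i * g i‖ ≤ ∑ i, ‖f i‖ * ‖g i‖ := by
        refine (norm_sum_le _ _).trans_eq ?_
        exact Finset.sum_congr rfl fun i _ => norm_mul _ _
    _ ≤ _ := Real.sum_mul_le_sqrt_mul_sqrt _ _ _

lemma trace_bound {I J K : Type*} [Fintype I] [Fintype J] [Fintype K]
    (a : I × J → ℂ) (b : J × K → ℂ) (c : K × I → ℂ) :
    ‖∑ i : I, ∑ j : J, ∑ k : K, a (i, j) * b (j, k) * c (k, i)‖ ≤
      Real.sqrt (∑ x, ‖a x‖ ^ 2) * Real.sqrt (∑ x, ‖b x‖ ^ 2) * Real.sqrt (∑ x, ‖c x‖ ^ 2) := by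
  set d : K × I → ℂ := fun w => ∑ j, a (w.2, j) * b (j, w.1) with hd
  have h1 : (∑ i : I, ∑ j : J, ∑ k : K, a (i, j) * b (j, k) * c (k, i))
      = ∑ w : K × I, d w * c w := by
    rw [Fintype.sum_prod_type]
    have hswap : ∀ i : I, ∑ j : J, ∑ k : K, a (i, j) * b (j, k) * c (k, i)
        = ∑ k : K, ∑ j : J, a (i, j) * b (j, k) * c (k, i) := fun i => Finset.sum_comm
    rw [Finset.sum_congr rfl fun i _ => hswap i, Finset.sum_comm]
    refine Finset.sum_congr rfl fun k _ => Finset.sum_congr rfl fun i _ => ?_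
    simp only [hd]
    rw [Finset.sum_mul]
  have h2 : ∑ w : K × I, ‖d w‖ ^ 2 ≤ (∑ x, ‖a x‖ ^ 2) * (∑ x, ‖b x‖ ^ 2) := by
    have hw : ∀ w : K × I, ‖d w‖ ^ 2 ≤ (∑ j, ‖a (w.2, j)‖ ^ 2) * (∑ j, ‖b (j, w.1)‖ ^ 2) := by
      intro w
      have := cs_complex (fun j => a (w.2, j)) (fun j => b (j, w.1))
      have h0 : (0:ℝ) ≤ Real.sqrt (∑ j, ‖a (w.2, j)‖ ^ 2) * Real.sqrt (∑ j, ‖b (j, w.1)‖ ^ 2) :=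
        mul_nonneg (Real.sqrt_nonneg _) (Real.sqrt_nonneg _)
      calc ‖d w‖ ^ 2 ≤ (Real.sqrt (∑ j, ‖a (w.2, j)‖ ^ 2) * Real.sqrt (∑ j, ‖b (j, w.1)‖ ^ 2)) ^ 2 := by
            exact pow_le_pow_left₀ (norm_nonneg _) this 2
        _ = _ := by
            rw [mul_pow, Real.sq_sqrt (by positivity), Real.sq_sqrt (by positivity)]
    calc ∑ w : K × I, ‖d w‖ ^ 2 ≤ ∑ w : K × I, (∑ j, ‖a (w.2, j)‖ ^ 2) * (∑ j, ‖b (j, w.1)‖ ^ 2) :=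
          Finset.sum_le_sum fun w _ => hw w
      _ = (∑ x, ‖a x‖ ^ 2) * (∑ x, ‖b x‖ ^ 2) := by
          have e1 : (∑ x : I × J, ‖a x‖ ^ 2) = ∑ i, ∑ j, ‖a (i, j)‖ ^ 2 :=
            Fintype.sum_prod_type _
          have e2 : (∑ x : J × K, ‖b x‖ ^ 2) = ∑ k, ∑ j, ‖b (j, k)‖ ^ 2 := by
            rw [Fintype.sum_prod_type]; exact Finset.sum_comm
          rw [e1, e2, Fintype.sum_prod_type, Finset.sum_mul_sum]
          exact Finset.sum_comm
  calc ‖∑ i : I, ∑ j : J, ∑ k : K, a (i, j) * b (j, k) * c (k, i)‖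
      = ‖∑ w : K × I, d w * c w‖ := by rw [h1]
    _ ≤ Real.sqrt (∑ w, ‖d w‖ ^ 2) * Real.sqrt (∑ w, ‖c w‖ ^ 2) := cs_complex _ _
    _ ≤ Real.sqrt ((∑ x, ‖a x‖ ^ 2) * (∑ x, ‖b x‖ ^ 2)) * Real.sqrt (∑ w, ‖c w‖ ^ 2) := by
        gcongr
    _ = _ := by rw [Real.sqrt_mul (by positivity)]

lemma std_sum_sq {A : Type*} [Fintype A] [DecidableEq A] (a0 : A) :
    ∑ x, ‖std a0 x‖ ^ 2 = 1 := by
  simp [std, apply_ite]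

lemma inner_matMul (p q r : ℕ) (u : T3 (Fin p × Fin q) (Fin q × Fin r) (Fin r × Fin p)) :
    (inner ℂ (matMulTensor p q r) u : ℂ)
      = ∑ i : Fin p, ∑ j : Fin q, ∑ k : Fin r, u ((i, j), (j, k), (k, i)) := by
  unfold matMulTensor
  simp only [sum_inner]
  exact Finset.sum_congr rfl fun i _ => Finset.sum_congr rfl fun j _ =>
    Finset.sum_congr rfl fun k _ => inner_std_pure3 _ _ _ u

lemma matMul_loop (p q r : ℕ) (i : Fin p) (j : Fin q) (k : Fin r) :
    matMulTensor p q r ((i, j), (j, k), (k, i)) = 1 := by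
  unfold matMulTensor
  simp only [T3.sum_apply]
  simp only [pure3, std, Prod.mk.injEq]
  rw [Finset.sum_eq_single i, Finset.sum_eq_single j, Finset.sum_eq_single k]
  · simp
  · intro k' _ hk; simp [hk.symm]
  · simp
  · intro j' _ hj
    rw [Finset.sum_eq_single k]
    · simp [hj.symm]
    · intro k' _ hk; simp [hk.symm]
    · simp
  · simp
  · intro i' _ hi
    rw [Finset.sum_eq_single j]
    · rw [Finset.sum_eq_single k]
      · simp [hi.symm]
      · intro k' _ hk; simp [hk.symm]
      · simp
    · intro j' _ hj
      rw [Finset.sum_eq_single k]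
      · simp [hj.symm]
      · intro k' _ hk; simp [hk.symm]
      · simp
    · simp
  · simp

lemma inner_matMul_pure_le (p q r : ℕ) (u : T3 (Fin p × Fin q) (Fin q × Fin r) (Fin r × Fin p))
    (hu : IsPure3 u) : ‖(inner ℂ (matMulTensor p q r) u : ℂ)‖ ≤ ‖u‖ := by
  obtain ⟨a, b, c, h⟩ := hu
  have hu' : u = pure3 a b c := WithLp.ofLp_injective 2 (funext fun x => h x)
  rw [hu', inner_matMul, norm_pure3]
  have hb := trace_bound a b c
  refine le_trans (le_of_eq ?_) (hb.trans (le_of_eq ?_))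
  · rfl
  · rw [Real.sqrt_mul (by positivity), Real.sqrt_mul (by positivity)]

/-- **Corollary 1.9.** `‖M_{p,q,r}‖⋆ = pqr` and `[M_{p,q,r}] = 1`. -/
theorem matMulTensor_nuclearNorm_spectralNorm (p q r : ℕ)
    (hp : 0 < p) (hq : 0 < q) (hr : 0 < r) :
    nuclearNorm3 (matMulTensor p q r) = (p * q * r : ℝ) ∧
    spectral3 (matMulTensor p q r) = 1 := by
  have i0 : Fin p := ⟨0, hp⟩
  have j0 : Fin q := ⟨0, hq⟩
  have k0 : Fin r := ⟨0, hr⟩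
  set M := matMulTensor p q r with hM
  -- the distinguished unit pure tensor
  set u0 : T3 (Fin p × Fin q) (Fin q × Fin r) (Fin r × Fin p) :=
    pure3 (std (i0, j0)) (std (j0, k0)) (std (k0, i0)) with hu0
  have hu0pure : IsPure3 u0 := ⟨std (i0, j0), std (j0, k0), std (k0, i0), fun x => rfl⟩
  have hu0norm : ‖u0‖ = 1 := by
    rw [hu0, norm_pure3, std_sum_sq, std_sum_sq, std_sum_sq]
    norm_num
  have hu0inner : (inner ℂ M u0 : ℂ) = 1 := by
    rw [← inner_conj_symm, hu0, inner_std_pure3, hM, matMul_loop]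
    simp
  -- ⟪M, M⟫ = pqr
  have hMM : (inner ℂ M M : ℂ) = ((p : ℂ) * q * r) := by
    rw [hM, inner_matMul]
    simp only [matMul_loop]
    simp [mul_assoc]
  have hMMnorm : ‖(inner ℂ M M : ℂ)‖ = (p * q * r : ℝ) := by
    rw [hMM]
    simp [norm_mul]
  -- spectral norm = 1
  have hspec : spectral3 M = 1 := by
    refine IsGreatest.csSup_eq ⟨⟨u0, hu0pure, hu0norm, by rw [hu0inner]; simp⟩, ?_⟩
    rintro x ⟨u, hu, hnorm, rfl⟩
    calc ‖(inner ℂ M u : ℂ)‖ ≤ ‖u‖ := inner_matMul_pure_le p q r u hu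
      _ = 1 := hnorm
  refine ⟨?_, hspec⟩
  -- nuclear norm
  refine IsLeast.csInf_eq ⟨?_, ?_⟩
  · -- (pqr : ℝ) is achieved
    have hcard : Fintype.card (Fin p × Fin q × Fin r) = p * q * r := by
      simp [mul_assoc]
    refine ⟨p * q * r, fun n => (fun w : Fin p × Fin q × Fin r =>
      pure3 (std (w.1, w.2.1)) (std (w.2.1, w.2.2)) (std (w.2.2, w.1)))
        ((Fintype.equivFinOfCardEq hcard).symm n), fun n => ⟨_, _, _, fun x => rfl⟩, ?_, ?_⟩
    · rw [Equiv.sum_comp (Fintype.equivFinOfCardEq hcard).symm]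
      rw [Fintype.sum_prod_type]
      exact Finset.sum_congr rfl fun i _ => (Fintype.sum_prod_type
        (fun w : Fin q × Fin r => pure3 (std (i, w.1)) (std (w.1, w.2)) (std (w.2, i)))).symm
    · have : ∀ n : Fin (p * q * r), ‖(fun w : Fin p × Fin q × Fin r =>
          pure3 (std (w.1, w.2.1)) (std (w.2.1, w.2.2)) (std (w.2.2, w.1)))
            ((Fintype.equivFinOfCardEq hcard).symm n)‖ = 1 := by
        intro n
        rw [norm_pure3, std_sum_sq, std_sum_sq, std_sum_sq]
        norm_num
      rw [Finset.sum_congr rfl fun n _ => this n]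
      simp
  · -- lower bound
    rintro x ⟨n, v, hpure, hsum, rfl⟩
    have key : (p * q * r : ℝ) = ‖(inner ℂ M M : ℂ)‖ := hMMnorm.symm
    rw [key]
    calc ‖(inner ℂ M M : ℂ)‖ = ‖∑ i, (inner ℂ M (v i) : ℂ)‖ := by
          rw [show (inner ℂ M M : ℂ) = ∑ i, (inner ℂ M (v i) : ℂ) by
            conv_lhs => rw [hsum]
            rw [inner_sum]
            exact Finset.sum_congr rfl fun i _ => by rw [← hsum]]
      _ ≤ ∑ i, ‖(inner ℂ M (v i) : ℂ)‖ := norm_sum_le _ _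
      _ ≤ ∑ i, ‖v i‖ := Finset.sum_le_sum fun i _ =>
          inner_matMul_pure_le p q r (v i) (hpure i)
end
end

section
/- Let n ≥ 1, let ζ = e^{2πi/n}, and let T_{C_n} = ∑_{i+j+k ≡ 0 mod n} x^i ⊗ x^j ⊗ x^k be the multiplication tensor of the group algebra of the cyclic group C_n = ⟨x⟩. Then the discrete Fourier transform decomposition T_{C_n} = ∑_{t=0}^{n-1} √n · (n^{-1/2} ∑_i ζ^{ti} x^i) ⊗ (n^{-1/2} ∑_j ζ^{tj} x^j) ⊗ (n^{-1/2} ∑_k ζ^{tk} x^k) is the unique diagonal singular value decomposition of T_{C_n}; in particular the singular values of T_{C_n} are √n with multiplicity n, and ‖T_{C_n}‖_⋆ = n√n. -/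
noncomputable section

open Finset

variable {A B C : Type*} [Fintype A] [Fintype B] [Fintype C]

/-- The multiplication tensor `T_{C_n} = ∑_{i+j+k ≡ 0 (mod n)} xⁱ ⊗ xʲ ⊗ xᵏ` of the group
algebra of the cyclic group `C_n`, whose orthonormal basis `x⁰, …, x^{n-1}` is indexed by
`ZMod n`. -/
def cycTensor (n : ℕ) [NeZero n] : T3 (ZMod n) (ZMod n) (ZMod n) :=
  WithLp.toLp 2 (fun x => if x.1 + x.2.1 + x.2.2 = 0 then 1 else 0)

/-- The normalized character vector `(1/√n) ∑_i ζ^{t i} xⁱ`, where `ζ = e^{2πi/n}`. -/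
def dftVec (n : ℕ) [NeZero n] (t : ZMod n) : ZMod n → ℂ :=
  fun i => Complex.exp (2 * Real.pi * Complex.I / n) ^ (t.val * i.val) / (Real.sqrt n : ℂ)

/-- The pure tensor appearing in the discrete Fourier transform decomposition of `T_{C_n}`. -/
def dftPure (n : ℕ) [NeZero n] (t : ZMod n) : T3 (ZMod n) (ZMod n) (ZMod n) :=
  pure3 (dftVec n t) (dftVec n t) (dftVec n t)


namespace CycAux

open Complex

variable (n : ℕ) [NeZero n]

local notation "ω" => Complex.exp (2 * Real.pi * Complex.I / (n : ℕ))

/-- view a function as a Euclidean vector -/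
def ev {A : Type*} [Fintype A] (a : A → ℂ) : EuclideanSpace ℂ A := WithLp.toLp 2 a

section pure

variable {A B C : Type*} [Fintype A] [Fintype B] [Fintype C]

lemma inner_pure3 (a a' : A → ℂ) (b b' : B → ℂ) (c c' : C → ℂ) :
    (inner ℂ (pure3 a b c) (pure3 a' b' c') : ℂ)
      = inner ℂ (ev a) (ev a') * inner ℂ (ev b) (ev b') * inner ℂ (ev c) (ev c') := by
  simp only [PiLp.inner_apply, RCLike.inner_apply, pure3, ev]
  rw [Fintype.sum_prod_type]
  simp only [Fintype.sum_prod_type, Finset.sum_mul, Finset.mul_sum]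
  rw [Finset.sum_comm]
  conv_lhs => enter [2, y]; rw [Finset.sum_comm]
  rw [Finset.sum_comm]
  refine Finset.sum_congr rfl fun x _ => Finset.sum_congr rfl fun y _ =>
    Finset.sum_congr rfl fun z _ => by simp only [map_mul]; ring

lemma norm_ev_sq (a : A → ℂ) : ‖ev a‖ ^ 2 = ∑ i, ‖a i‖ ^ 2 := by
  rw [EuclideanSpace.norm_eq, Real.sq_sqrt (by positivity)]; rfl

lemma norm_pure3 (a : A → ℂ) (b : B → ℂ) (c : C → ℂ) :
    ‖pure3 a b c‖ = ‖ev a‖ * ‖ev b‖ * ‖ev c‖ := by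
  have h : ‖pure3 a b c‖ ^ 2 = (‖ev a‖ * ‖ev b‖ * ‖ev c‖) ^ 2 := by
    rw [mul_pow, mul_pow, norm_ev_sq, norm_ev_sq, norm_ev_sq]
    rw [EuclideanSpace.norm_eq, Real.sq_sqrt (by positivity)]
    show (∑ x : A × B × C, ‖a x.1 * b x.2.1 * c x.2.2‖^2) = _
    rw [Fintype.sum_prod_type]
    simp only [Fintype.sum_prod_type, Finset.sum_mul, Finset.mul_sum]
    rw [Finset.sum_comm]
    conv_lhs => enter [2, y]; rw [Finset.sum_comm]
    rw [Finset.sum_comm]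
    refine Finset.sum_congr rfl fun x _ => Finset.sum_congr rfl fun y _ =>
      Finset.sum_congr rfl fun z _ => by simp only [norm_mul]; ring
  have h2 : (0:ℝ) ≤ ‖ev a‖ * ‖ev b‖ * ‖ev c‖ := by positivity
  nlinarith [norm_nonneg (pure3 a b c)]

lemma isPure3_pure3 (a : A → ℂ) (b : B → ℂ) (c : C → ℂ) : IsPure3 (pure3 a b c) :=
  ⟨a, b, c, fun _ => rfl⟩

lemma isPure3_smul (z : ℂ) (a : A → ℂ) (b : B → ℂ) (c : C → ℂ) :
    IsPure3 (z • pure3 a b c) :=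
  ⟨fun i => z * a i, b, c, fun x => by
    simp [pure3, PiLp.smul_apply, smul_eq_mul]; ring⟩

lemma isPure3_eq {T : T3 A B C} (h : IsPure3 T) :
    ∃ (a : A → ℂ) (b : B → ℂ) (c : C → ℂ), T = pure3 a b c := by
  obtain ⟨a, b, c, h⟩ := h
  exact ⟨a, b, c, PiLp.ext fun x => h x⟩

end pure

lemma omega_pow_n : ω ^ n = 1 := by
  rw [← Complex.exp_nat_mul]
  have hn : (n:ℂ) ≠ 0 := Nat.cast_ne_zero.2 (NeZero.ne n)
  rw [mul_comm, div_mul_cancel₀ _ hn, Complex.exp_two_pi_mul_I]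

lemma conj_omega_pow (k : ℕ) : (starRingEnd ℂ) (ω ^ k) = ω ^ ((n-1) * k) := by
  have hinv : (starRingEnd ℂ) ω = ω⁻¹ := by
    rw [← Complex.exp_conj, ← Complex.exp_neg]
    congr 1
    simp only [map_div₀, map_mul, Complex.conj_I, Complex.conj_ofReal, map_ofNat, map_natCast]
    ring
  have h1 : ω ^ (n-1) = ω⁻¹ := by
    refine eq_inv_of_mul_eq_one_left ?_
    rw [← pow_succ, Nat.sub_add_cancel (Nat.one_le_iff_ne_zero.2 (NeZero.ne n)), omega_pow_n]
  rw [map_pow, hinv, ← h1, ← pow_mul]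

lemma gsum (m : ℕ) :
    ∑ i : ZMod n, ω ^ (m * (ZMod.val i)) = if (m : ZMod n) = 0 then (n:ℂ) else 0 := by
  have h1 : ∑ i : ZMod n, ω ^ (m * (ZMod.val i)) = ∑ i ∈ Finset.range n, (ω ^ m) ^ i := by
    refine Finset.sum_nbij' (i := fun a : ZMod n => ZMod.val a)
      (j := fun i : ℕ => (i : ZMod n)) ?_ ?_ ?_ ?_ ?_
    · intro a _; exact Finset.mem_range.2 (ZMod.val_lt a)
    · intro a _; exact Finset.mem_univ _
    · intro a _; simp [ZMod.natCast_val, ZMod.cast_id]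
    · intro a ha; exact ZMod.val_natCast_of_lt (Finset.mem_range.1 ha)
    · intro a _; rw [pow_mul]
  rw [h1]
  by_cases h : (m : ZMod n) = 0
  · have hd : n ∣ m := (ZMod.natCast_eq_zero_iff m n).1 h
    have : ω ^ m = 1 := ((Complex.isPrimitiveRoot_exp n (NeZero.ne n)).pow_eq_one_iff_dvd m).2 hd
    simp [this, h]
  · have hne : ω ^ m ≠ 1 := fun hc => h ((ZMod.natCast_eq_zero_iff m n).2
      (((Complex.isPrimitiveRoot_exp n (NeZero.ne n)).pow_eq_one_iff_dvd m).1 hc))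
    rw [if_neg h, geom_sum_eq hne, ← pow_mul, mul_comm m n, pow_mul, omega_pow_n, one_pow]
    simp

lemma sqrtn_pos : 0 < Real.sqrt n :=
  Real.sqrt_pos.2 (by exact_mod_cast Nat.pos_of_ne_zero (NeZero.ne n))

lemma sqrtn_ne : (Real.sqrt n : ℂ) ≠ 0 := by
  exact_mod_cast Complex.ofReal_ne_zero.2 (ne_of_gt (sqrtn_pos n))

lemma sqrtn_mul_self : (Real.sqrt n : ℂ) * (Real.sqrt n : ℂ) = (n : ℂ) := by
  rw [← Complex.ofReal_mul, Real.mul_self_sqrt (Nat.cast_nonneg n)]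
  simp

/-- orthonormality of the DFT vectors -/
lemma inner_dftVec (s t : ZMod n) :
    (inner ℂ (ev (dftVec n s)) (ev (dftVec n t)) : ℂ) = if s = t then 1 else 0 := by
  have hn : (n:ℂ) ≠ 0 := Nat.cast_ne_zero.2 (NeZero.ne n)
  simp only [PiLp.inner_apply, RCLike.inner_apply, ev, dftVec]
  have key : ∀ i : ZMod n,
      (starRingEnd ℂ) (ω ^ (s.val * i.val) / (Real.sqrt n : ℂ)) *
        (ω ^ (t.val * i.val) / (Real.sqrt n : ℂ))
      = ω ^ (((n-1) * s.val + t.val) * i.val) / n := by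
    intro i
    rw [map_div₀, conj_omega_pow, Complex.conj_ofReal, div_mul_div_comm, sqrtn_mul_self,
      ← pow_add]
    congr 2
    ring
  rw [Finset.sum_congr rfl (fun i _ => (mul_comm _ _).trans (key i)), ← Finset.sum_div, gsum]
  have hiff : ((((n-1) * s.val + t.val : ℕ)) : ZMod n) = 0 ↔ s = t := by
    push_cast [Nat.cast_sub (Nat.one_le_iff_ne_zero.2 (NeZero.ne n))]
    rw [ZMod.natCast_self, ZMod.natCast_val, ZMod.natCast_val, ZMod.cast_id, ZMod.cast_id,
      zero_sub, neg_mul, one_mul, neg_add_eq_zero]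
  by_cases h : s = t
  · rw [if_pos (hiff.2 h), if_pos h, div_self hn]
  · rw [if_neg (fun hc => h (hiff.1 hc)), if_neg h, zero_div]

lemma norm_dftVec (t : ZMod n) : ‖ev (dftVec n t)‖ = 1 := by
  have h := inner_dftVec n t t
  rw [if_pos rfl] at h
  have h2 : (‖ev (dftVec n t)‖ : ℝ) * ‖ev (dftVec n t)‖ = 1 := by
    have := @inner_self_eq_norm_mul_norm ℂ _ _ _ _ (ev (dftVec n t))
    rw [h] at this
    simpa using this.symm
  nlinarith [norm_nonneg (ev (dftVec n t))]

lemma norm_dftPure (t : ZMod n) : ‖dftPure n t‖ = 1 := by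
  rw [dftPure, norm_pure3, norm_dftVec]; ring

lemma inner_dftPure (s t : ZMod n) :
    (inner ℂ (dftPure n s) (dftPure n t) : ℂ) = if s = t then 1 else 0 := by
  rw [dftPure, dftPure, inner_pure3, inner_dftVec]
  by_cases h : s = t <;> simp [h]

/-- the DFT decomposition of the cyclic tensor -/
lemma cyc_eq_sum : cycTensor n = ∑ t : ZMod n, (Real.sqrt n : ℂ) • dftPure n t := by
  have hn : (n:ℂ) ≠ 0 := Nat.cast_ne_zero.2 (NeZero.ne n)
  refine PiLp.ext fun x => ?_
  obtain ⟨i, j, k⟩ := x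
  have happ : (∑ t : ZMod n, (Real.sqrt n : ℂ) • dftPure n t) (i, j, k)
      = ∑ t : ZMod n, (Real.sqrt n : ℂ) * dftPure n t (i, j, k) := by
    rw [WithLp.ofLp_sum, Finset.sum_apply]
    rfl
  rw [happ]
  have key : ∀ t : ZMod n, (Real.sqrt n : ℂ) * dftPure n t (i, j, k)
      = ω ^ ((i.val + j.val + k.val) * t.val) / n := by
    intro t
    show (Real.sqrt n : ℂ) * (ω ^ (t.val * i.val) / _ * (ω ^ (t.val * j.val) / _) *
      (ω ^ (t.val * k.val) / _)) = _
    rw [div_mul_div_comm, div_mul_div_comm, ← pow_add, ← pow_add]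
    field_simp [sqrtn_ne n]
    have he : (i.val + j.val + k.val) * t.val = t.val * i.val + t.val * j.val + t.val * k.val := by
      ring
    rw [he, sq, sqrtn_mul_self]
  rw [Finset.sum_congr rfl (fun t _ => key t), ← Finset.sum_div, gsum]
  have hiff : (((i.val + j.val + k.val : ℕ)) : ZMod n) = 0 ↔ i + j + k = 0 := by
    push_cast [ZMod.natCast_val, ZMod.cast_id]
    rfl
  show cycTensor n (i, j, k) = _
  unfold cycTensor
  simp only [WithLp.ofLp_toLp]
  by_cases h : i + j + k = 0
  · rw [if_pos h, if_pos (hiff.2 h), div_self hn]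
  · rw [if_neg h, if_neg (fun hc => h (hiff.1 hc)), zero_div]

lemma orthonormal_dftVec : Orthonormal ℂ (fun t => ev (dftVec n t)) := by
  rw [orthonormal_iff_ite]
  intro s t
  rw [inner_dftVec]

lemma bessel (a : ZMod n → ℂ) :
    ∑ t : ZMod n, ‖(inner ℂ (ev (dftVec n t)) (ev a) : ℂ)‖ ^ 2 ≤ ‖ev a‖ ^ 2 := by
  simpa using (orthonormal_dftVec n).sum_inner_products_le (s := Finset.univ) (ev a)

lemma norm_inner_dftPure_pure3 (t : ZMod n) (a b c : ZMod n → ℂ) :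
    ‖(inner ℂ (dftPure n t) (pure3 a b c) : ℂ)‖
      = ‖(inner ℂ (ev (dftVec n t)) (ev a) : ℂ)‖ * ‖(inner ℂ (ev (dftVec n t)) (ev b) : ℂ)‖ *
        ‖(inner ℂ (ev (dftVec n t)) (ev c) : ℂ)‖ := by
  rw [dftPure, inner_pure3, norm_mul, norm_mul]

/-- the key inequality -/
lemma key_bound (a b c : ZMod n → ℂ) :
    ∑ t : ZMod n, ‖(inner ℂ (dftPure n t) (pure3 a b c) : ℂ)‖ ≤ ‖ev a‖ * ‖ev b‖ * ‖ev c‖ := by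
  simp only [norm_inner_dftPure_pure3]
  set α := fun t : ZMod n => ‖(inner ℂ (ev (dftVec n t)) (ev a) : ℂ)‖ with hα
  set β := fun t : ZMod n => ‖(inner ℂ (ev (dftVec n t)) (ev b) : ℂ)‖ with hβ
  set γ := fun t : ZMod n => ‖(inner ℂ (ev (dftVec n t)) (ev c) : ℂ)‖ with hγ
  have hab : (∑ t, α t * β t) ≤ ‖ev a‖ * ‖ev b‖ := by
    have h2 := Finset.sum_mul_sq_le_sq_mul_sq Finset.univ α β
    have ha := bessel n a
    have hb := bessel n b
    have hs : (0:ℝ) ≤ ∑ t, α t * β t := Finset.sum_nonneg fun t _ => by positivity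
    nlinarith [norm_nonneg (ev a), norm_nonneg (ev b),
      mul_nonneg (norm_nonneg (ev a)) (norm_nonneg (ev b)),
      Finset.sum_nonneg (fun t (_ : t ∈ Finset.univ) => sq_nonneg (α t)),
      Finset.sum_nonneg (fun t (_ : t ∈ Finset.univ) => sq_nonneg (β t))]
  have hc : ∀ t, γ t ≤ ‖ev c‖ := by
    intro t
    calc γ t ≤ ‖ev (dftVec n t)‖ * ‖ev c‖ := norm_inner_le_norm _ _
    _ = ‖ev c‖ := by rw [norm_dftVec, one_mul]
  calc ∑ t, α t * β t * γ t ≤ ∑ t, α t * β t * ‖ev c‖ := by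
        refine Finset.sum_le_sum fun t _ => ?_
        exact mul_le_mul_of_nonneg_left (hc t) (by positivity)
    _ = (∑ t, α t * β t) * ‖ev c‖ := by rw [Finset.sum_mul]
    _ ≤ ‖ev a‖ * ‖ev b‖ * ‖ev c‖ := mul_le_mul_of_nonneg_right hab (norm_nonneg (ev c))

/-- equality analysis for the key inequality -/
lemma key_eq (a b c : ZMod n → ℂ) (h1 : ‖ev a‖ * ‖ev b‖ * ‖ev c‖ = 1)
    (h2 : ∑ t : ZMod n, ‖(inner ℂ (dftPure n t) (pure3 a b c) : ℂ)‖ = 1) :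
    ∃ t₀ : ZMod n, ∀ t, t ≠ t₀ → (inner ℂ (dftPure n t) (pure3 a b c) : ℂ) = 0 := by
  simp only [norm_inner_dftPure_pure3] at h2
  set α := fun t : ZMod n => ‖(inner ℂ (ev (dftVec n t)) (ev a) : ℂ)‖ with hα
  set β := fun t : ZMod n => ‖(inner ℂ (ev (dftVec n t)) (ev b) : ℂ)‖ with hβ
  set γ := fun t : ZMod n => ‖(inner ℂ (ev (dftVec n t)) (ev c) : ℂ)‖ with hγ
  have hαn : ∀ t, 0 ≤ α t := fun t => norm_nonneg _
  have hβn : ∀ t, 0 ≤ β t := fun t => norm_nonneg _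
  have hγn : ∀ t, 0 ≤ γ t := fun t => norm_nonneg _
  have hc : ∀ t, γ t ≤ ‖ev c‖ := fun t => by
    calc γ t ≤ ‖ev (dftVec n t)‖ * ‖ev c‖ := norm_inner_le_norm _ _
    _ = ‖ev c‖ := by rw [norm_dftVec, one_mul]
  have hab : (∑ t, α t * β t) ≤ ‖ev a‖ * ‖ev b‖ := by
    have h2' := Finset.sum_mul_sq_le_sq_mul_sq Finset.univ α β
    have ha := bessel n a
    have hb := bessel n b
    have hs : (0:ℝ) ≤ ∑ t, α t * β t := Finset.sum_nonneg fun t _ => by positivity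
    nlinarith [norm_nonneg (ev a), norm_nonneg (ev b),
      mul_nonneg (norm_nonneg (ev a)) (norm_nonneg (ev b)),
      Finset.sum_nonneg (fun t (_ : t ∈ Finset.univ) => sq_nonneg (α t)),
      Finset.sum_nonneg (fun t (_ : t ∈ Finset.univ) => sq_nonneg (β t))]
  have hpt : ∀ t : ZMod n, α t * β t * (‖ev c‖ - γ t) = 0 := by
    have hsum_le : ∑ t, α t * β t * ‖ev c‖ ≤ 1 := by
      rw [← Finset.sum_mul]
      calc (∑ t, α t * β t) * ‖ev c‖ ≤ (‖ev a‖ * ‖ev b‖) * ‖ev c‖ :=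
            mul_le_mul_of_nonneg_right hab (norm_nonneg (ev c))
        _ = 1 := h1
    have hzero : ∑ t, α t * β t * (‖ev c‖ - γ t) = 0 := by
      have hle : ∑ t, α t * β t * (‖ev c‖ - γ t) ≤ 0 := by
        have hsplit : ∑ t, α t * β t * (‖ev c‖ - γ t)
            = (∑ t, α t * β t * ‖ev c‖) - ∑ t, α t * β t * γ t := by
          rw [← Finset.sum_sub_distrib]
          exact Finset.sum_congr rfl fun t _ => by ring
        rw [hsplit, h2]
        linarith
      have hge : 0 ≤ ∑ t, α t * β t * (‖ev c‖ - γ t) :=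
        Finset.sum_nonneg fun t _ =>
          mul_nonneg (mul_nonneg (hαn t) (hβn t)) (sub_nonneg.2 (hc t))
      linarith
    intro t
    exact (Finset.sum_eq_zero_iff_of_nonneg (fun t _ =>
      mul_nonneg (mul_nonneg (hαn t) (hβn t)) (sub_nonneg.2 (hc t)))).1 hzero t (Finset.mem_univ t)
  have hγeq : ∀ t, α t * β t * γ t ≠ 0 → γ t = ‖ev c‖ := by
    intro t ht
    have hαβ : α t * β t ≠ 0 := fun h => ht (by rw [h, zero_mul])
    rcases mul_eq_zero.1 (hpt t) with h | h
    · exact absurd h hαβ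
    · linarith [sub_eq_zero.1 h]
  have huniq : ∀ t₁ t₂, α t₁ * β t₁ * γ t₁ ≠ 0 → α t₂ * β t₂ * γ t₂ ≠ 0 → t₁ = t₂ := by
    intro t₁ t₂ hx₁ hx₂
    by_contra hne
    have hγ1 := hγeq t₁ hx₁
    have hγ2 := hγeq t₂ hx₂
    have hcpos : 0 < ‖ev c‖ := by
      rcases lt_or_eq_of_le (norm_nonneg (ev c)) with h | h
      · exact h
      · exact absurd (hγ1.trans h.symm) (fun hh => hx₁ (by rw [hh, mul_zero]))
    have hpair : γ t₁ ^ 2 + γ t₂ ^ 2 ≤ ∑ t, γ t ^ 2 := by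
      have hsub := Finset.sum_le_sum_of_subset_of_nonneg
        (Finset.subset_univ ({t₁, t₂} : Finset (ZMod n))) (fun t _ _ => sq_nonneg (γ t))
      rwa [Finset.sum_pair hne] at hsub
    have hbc := bessel n c
    nlinarith
  have hval : ∀ t, ‖(inner ℂ (dftPure n t) (pure3 a b c) : ℂ)‖ = α t * β t * γ t :=
    fun t => norm_inner_dftPure_pure3 n t a b c
  by_cases hex : ∃ t, α t * β t * γ t ≠ 0
  · obtain ⟨t₀, ht₀⟩ := hex
    refine ⟨t₀, fun t htne => ?_⟩
    by_contra ht
    have : α t * β t * γ t ≠ 0 := by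
      rw [← hval]
      simpa using ht
    exact htne (huniq t t₀ this ht₀)
  · push_neg at hex
    exfalso
    rw [Finset.sum_eq_zero (fun t _ => hex t)] at h2
    exact one_ne_zero h2.symm

lemma conj_sqrtn : (starRingEnd ℂ) ((Real.sqrt n : ℝ) : ℂ) = ((Real.sqrt n : ℝ) : ℂ) :=
  Complex.conj_ofReal _

lemma inner_dftPure_cyc (s : ZMod n) :
    (inner ℂ (dftPure n s) (cycTensor n) : ℂ) = (Real.sqrt n : ℂ) := by
  rw [cyc_eq_sum, inner_sum]
  simp only [inner_smul_right, inner_dftPure]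
  rw [Finset.sum_eq_single s]
  · rw [if_pos rfl, mul_one]
  · intro t _ ht
    rw [if_neg (Ne.symm ht), mul_zero]
  · intro h
    exact absurd (Finset.mem_univ s) h

lemma inner_cyc_self : (inner ℂ (cycTensor n) (cycTensor n) : ℂ) = (n : ℂ) * n := by
  have hstep : (inner ℂ (cycTensor n) (cycTensor n) : ℂ)
      = ∑ t : ZMod n, ((Real.sqrt n : ℝ) : ℂ) * (inner ℂ (dftPure n t) (cycTensor n) : ℂ) := by
    nth_rewrite 1 [cyc_eq_sum n]
    rw [sum_inner]
    exact Finset.sum_congr rfl fun t _ => by rw [inner_smul_left, conj_sqrtn]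
  rw [hstep]
  simp only [inner_dftPure_cyc]
  rw [sqrtn_mul_self, Finset.sum_const, Finset.card_univ, ZMod.card, nsmul_eq_mul]

/-- spectral bound -/
lemma spec_bound (a b c : ZMod n → ℂ) :
    ‖(inner ℂ (cycTensor n) (pure3 a b c) : ℂ)‖
      ≤ Real.sqrt n * (‖ev a‖ * ‖ev b‖ * ‖ev c‖) := by
  rw [cyc_eq_sum, sum_inner]
  simp only [inner_smul_left, conj_sqrtn]
  calc ‖∑ t : ZMod n, ((Real.sqrt n : ℝ) : ℂ) * (inner ℂ (dftPure n t) (pure3 a b c) : ℂ)‖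
      ≤ ∑ t : ZMod n, ‖((Real.sqrt n : ℝ) : ℂ) * (inner ℂ (dftPure n t) (pure3 a b c) : ℂ)‖ :=
        norm_sum_le _ _
    _ = Real.sqrt n * ∑ t : ZMod n, ‖(inner ℂ (dftPure n t) (pure3 a b c) : ℂ)‖ := by
        rw [Finset.mul_sum]
        refine Finset.sum_congr rfl fun t _ => ?_
        rw [norm_mul, Complex.norm_real, Real.norm_eq_abs,
          _root_.abs_of_nonneg (Real.sqrt_nonneg _)]
    _ ≤ Real.sqrt n * (‖ev a‖ * ‖ev b‖ * ‖ev c‖) :=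
        mul_le_mul_of_nonneg_left (key_bound n a b c) (Real.sqrt_nonneg _)

section bracket

variable {A B C : Type*} [Fintype A] [Fintype B] [Fintype C]
variable {κ : Type*} [Fintype κ]

lemma bracket_simp (S : κ → T3 A B C) :
    bracket3 S ((2:ℝ)/2) = sSup {c : ℝ | ∃ u : T3 A B C, IsPure3 u ∧ ‖u‖ = 1 ∧
      c = ∑ i, ‖(inner ℂ (S i) u : ℂ)‖} := by
  rw [bracket3]
  norm_num

lemma bracket_eq_one (S : κ → T3 A B C)
    (hub : ∀ u : T3 A B C, IsPure3 u → ‖u‖ = 1 → ∑ i, ‖(inner ℂ (S i) u : ℂ)‖ ≤ 1)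
    (hmem : ∃ u : T3 A B C, IsPure3 u ∧ ‖u‖ = 1 ∧ ∑ i, ‖(inner ℂ (S i) u : ℂ)‖ = 1) :
    bracket3 S ((2:ℝ)/2) = 1 := by
  rw [bracket_simp]
  apply le_antisymm
  · refine csSup_le ?_ ?_
    · obtain ⟨u, h1, h2, h3⟩ := hmem
      exact ⟨1, u, h1, h2, h3.symm⟩
    · rintro b ⟨u, h1, h2, rfl⟩
      exact hub u h1 h2
  · obtain ⟨u, h1, h2, h3⟩ := hmem
    refine le_csSup ⟨1, ?_⟩ ⟨u, h1, h2, h3.symm⟩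
    rintro b ⟨v, g1, g2, rfl⟩
    exact hub v g1 g2

lemma bracket_le_of_TOrtho (S : κ → T3 A B C) (h : TOrtho3 S 2) :
    ∀ u : T3 A B C, IsPure3 u → ‖u‖ = 1 → ∑ i, ‖(inner ℂ (S i) u : ℂ)‖ ≤ 1 := by
  intro u h1 h2
  obtain ⟨hnorm, hbr⟩ := h
  rw [bracket_simp] at hbr
  have hbdd : BddAbove {c : ℝ | ∃ u : T3 A B C, IsPure3 u ∧ ‖u‖ = 1 ∧
      c = ∑ i, ‖(inner ℂ (S i) u : ℂ)‖} := by
    refine ⟨(Fintype.card κ : ℝ), ?_⟩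
    rintro b ⟨v, g1, g2, rfl⟩
    calc ∑ i, ‖(inner ℂ (S i) v : ℂ)‖ ≤ ∑ i : κ, (1:ℝ) := by
          refine Finset.sum_le_sum fun i _ => ?_
          calc ‖(inner ℂ (S i) v : ℂ)‖ ≤ ‖S i‖ * ‖v‖ := norm_inner_le_norm _ _
          _ = 1 := by rw [hnorm i, g2, one_mul]
      _ = Fintype.card κ := by simp
  calc ∑ i, ‖(inner ℂ (S i) u : ℂ)‖ ≤ sSup _ := le_csSup hbdd ⟨u, h1, h2, rfl⟩
    _ = 1 := hbr

lemma inner_self_one {T : T3 A B C} (h : ‖T‖ = 1) : (inner ℂ T T : ℂ) = 1 := by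
  rw [@inner_self_eq_norm_sq_to_K ℂ, h]
  norm_num

lemma ortho_of_TOrtho (S : κ → T3 A B C) (hpure : ∀ i, IsPure3 (S i)) (h : TOrtho3 S 2) :
    ∀ i j, i ≠ j → (inner ℂ (S i) (S j) : ℂ) = 0 := by
  intro i j hij
  classical
  · have hle := bracket_le_of_TOrtho S h (S j) (hpure j) (h.1 j)
    have hsplit := Finset.add_sum_erase Finset.univ
      (fun i => ‖(inner ℂ (S i) (S j) : ℂ)‖) (Finset.mem_univ j)
    have hjj : ‖(inner ℂ (S j) (S j) : ℂ)‖ = 1 := by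
      rw [inner_self_one (h.1 j), norm_one]
    have herase : ∑ i ∈ Finset.univ.erase j, ‖(inner ℂ (S i) (S j) : ℂ)‖ ≤ 0 := by
      rw [← hsplit] at hle
      rw [hjj] at hle
      linarith
    have hzero : ∀ i ∈ Finset.univ.erase j, ‖(inner ℂ (S i) (S j) : ℂ)‖ = 0 := by
      intro i hi
      have hge : 0 ≤ ∑ i ∈ Finset.univ.erase j, ‖(inner ℂ (S i) (S j) : ℂ)‖ :=
        Finset.sum_nonneg fun _ _ => norm_nonneg _
      have := (Finset.sum_eq_zero_iff_of_nonneg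
        (fun _ _ => norm_nonneg ((inner ℂ (S _) (S j) : ℂ)))).1 (le_antisymm herase hge)
      exact this i hi
    have := hzero i (Finset.mem_erase.2 ⟨hij, Finset.mem_univ i⟩)
    exact norm_eq_zero.1 this

end bracket

/-- the DFT family is 2-orthogonal -/
lemma tortho_dftPure : TOrtho3 (dftPure n) 2 := by
  refine ⟨norm_dftPure n, ?_⟩
  have h22 : (2:ℝ)/2 = (2:ℝ)/2 := rfl
  refine bracket_eq_one (dftPure n) ?_ ?_
  · intro u h1 h2
    obtain ⟨a, b, c, rfl⟩ := isPure3_eq h1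
    rw [norm_pure3] at h2
    calc ∑ t, ‖(inner ℂ (dftPure n t) (pure3 a b c) : ℂ)‖ ≤ ‖ev a‖ * ‖ev b‖ * ‖ev c‖ :=
          key_bound n a b c
      _ = 1 := h2
  · refine ⟨dftPure n 0, isPure3_pure3 _ _ _, norm_dftPure n 0, ?_⟩
    have : ∀ t : ZMod n, ‖(inner ℂ (dftPure n t) (dftPure n 0) : ℂ)‖
        = if t = (0 : ZMod n) then 1 else 0 := by
      intro t
      rw [inner_dftPure]
      by_cases h : t = 0 <;> simp [h]
    rw [Finset.sum_congr rfl fun t _ => this t, Finset.sum_ite_eq' Finset.univ (0 : ZMod n)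
      (fun _ => (1:ℝ))]
    simp

lemma isDSVD_dft : IsDSVD3 (cycTensor n) (fun _ : ZMod n => Real.sqrt n) (dftPure n) := by
  refine ⟨fun _ => sqrtn_pos n, fun t => ?_, tortho_dftPure n, cyc_eq_sum n⟩
  rw [dftPure]
  exact isPure3_pure3 _ _ _

lemma sum_fin_zmod {M : Type*} [AddCommMonoid M] (f : ZMod n → M) :
    ∑ i : Fin n, f (((i : ℕ) : ZMod n)) = ∑ t : ZMod n, f t := by
  refine Fintype.sum_bijective (fun i : Fin n => ((i : ℕ) : ZMod n)) ⟨?_, ?_⟩ _ _ (fun i => rfl)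
  · intro i j h
    have h2 := congrArg ZMod.val h
    rw [ZMod.val_natCast_of_lt i.2, ZMod.val_natCast_of_lt j.2] at h2
    exact Fin.ext h2
  · intro t
    exact ⟨⟨t.val, ZMod.val_lt t⟩, by simp [ZMod.natCast_val, ZMod.cast_id]⟩

lemma norm_smul_dftPure (t : ZMod n) : ‖(Real.sqrt n : ℂ) • dftPure n t‖ = Real.sqrt n := by
  rw [norm_smul, norm_dftPure, mul_one, Complex.norm_real, Real.norm_eq_abs,
    _root_.abs_of_nonneg (Real.sqrt_nonneg _)]

lemma spec_bound' (v : T3 (ZMod n) (ZMod n) (ZMod n)) (hv : IsPure3 v) :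
    ‖(inner ℂ (cycTensor n) v : ℂ)‖ ≤ Real.sqrt n * ‖v‖ := by
  obtain ⟨a, b, c, rfl⟩ := isPure3_eq hv
  rw [norm_pure3]
  exact spec_bound n a b c

lemma nuclear_cyc : nuclearNorm3 (cycTensor n) = n * Real.sqrt n := by
  have hmem : (n * Real.sqrt n : ℝ) ∈ {c : ℝ | ∃ (r : ℕ)
      (v : Fin r → T3 (ZMod n) (ZMod n) (ZMod n)),
      (∀ i, IsPure3 (v i)) ∧ cycTensor n = ∑ i, v i ∧ c = ∑ i, ‖v i‖} := by
    refine ⟨n, fun i => (Real.sqrt n : ℂ) • dftPure n ((i : ℕ) : ZMod n), ?_, ?_, ?_⟩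
    · intro i
      exact isPure3_smul (Real.sqrt n : ℂ) (dftVec n _) (dftVec n _) (dftVec n _)
    · rw [sum_fin_zmod n (fun t => (Real.sqrt n : ℂ) • dftPure n t)]
      exact cyc_eq_sum n
    · rw [Finset.sum_congr rfl (fun i _ => norm_smul_dftPure n _), Finset.sum_const,
        Finset.card_univ, Fintype.card_fin, nsmul_eq_mul]
  rw [nuclearNorm3]
  apply le_antisymm
  · exact csInf_le ⟨0, fun c ⟨r, v, _, _, hc⟩ =>
      hc ▸ Finset.sum_nonneg fun i _ => norm_nonneg _⟩ hmem
  · refine le_csInf ⟨_, hmem⟩ ?_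
    rintro c ⟨r, v, hpure, hsum, rfl⟩
    have hnn : (n:ℝ) * n ≤ Real.sqrt n * ∑ i, ‖v i‖ := by
      have h1 : ((n:ℝ) * n : ℝ) = Complex.re (inner ℂ (cycTensor n) (cycTensor n) : ℂ) := by
        rw [inner_cyc_self]
        norm_num
      have h2 : (inner ℂ (cycTensor n) (cycTensor n) : ℂ) = ∑ i, (inner ℂ (cycTensor n) (v i) : ℂ) := by
        nth_rewrite 2 [hsum]
        rw [inner_sum]
      calc ((n:ℝ) * n : ℝ) = Complex.re (∑ i, (inner ℂ (cycTensor n) (v i) : ℂ)) := by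
            rw [← h2, ← h1]
        _ ≤ ‖∑ i, (inner ℂ (cycTensor n) (v i) : ℂ)‖ := Complex.re_le_norm _
        _ ≤ ∑ i, ‖(inner ℂ (cycTensor n) (v i) : ℂ)‖ := norm_sum_le _ _
        _ ≤ ∑ i, Real.sqrt n * ‖v i‖ :=
            Finset.sum_le_sum fun i _ => spec_bound' n (v i) (hpure i)
        _ = Real.sqrt n * ∑ i, ‖v i‖ := by rw [Finset.mul_sum]
    have hsq : Real.sqrt n * Real.sqrt n = (n:ℝ) := Real.mul_self_sqrt (Nat.cast_nonneg n)
    have hpos := sqrtn_pos n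
    have : (n * Real.sqrt n) * Real.sqrt n ≤ (∑ i, ‖v i‖) * Real.sqrt n := by
      calc (n * Real.sqrt n) * Real.sqrt n = (n:ℝ) * n := by
            rw [mul_assoc, hsq]
        _ ≤ Real.sqrt n * ∑ i, ‖v i‖ := hnn
        _ = (∑ i, ‖v i‖) * Real.sqrt n := mul_comm _ _
    exact le_of_mul_le_mul_right this hpos

lemma unique_dsvd (κ : Type) [Fintype κ] (σ : κ → ℝ) (w : κ → T3 (ZMod n) (ZMod n) (ZMod n))
    (h : IsDSVD3 (cycTensor n) σ w) :
    ∃ e : κ ≃ ZMod n, ∀ j, (σ j : ℂ) • w j = (Real.sqrt n : ℂ) • dftPure n (e j) := by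
  classical
  obtain ⟨hpos, hpure, hortho, hsum⟩ := h
  set c : κ → ZMod n → ℂ := fun j t => (inner ℂ (dftPure n t) (w j) : ℂ) with hc
  have hwnorm : ∀ j, ‖w j‖ = 1 := hortho.1
  have hw0 : ∀ i j, i ≠ j → (inner ℂ (w i) (w j) : ℂ) = 0 := ortho_of_TOrtho w hpure hortho
  have hw1 : ∀ j, (inner ℂ (w j) (w j) : ℂ) = 1 := fun j => inner_self_one (hwnorm j)
  -- (F1) column sums
  have hcol : ∀ t, ∑ j, (σ j : ℂ) * c j t = (Real.sqrt n : ℂ) := by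
    intro t
    have h1 : (inner ℂ (dftPure n t) (cycTensor n) : ℂ) = ∑ j, (σ j : ℂ) * c j t := by
      nth_rewrite 1 [hsum]
      rw [inner_sum]
      exact Finset.sum_congr rfl fun j _ => by rw [inner_smul_right]
    rw [← h1, inner_dftPure_cyc]
  -- (F2') σ j = ⟪T, w j⟫
  have hTw : ∀ j, (inner ℂ (cycTensor n) (w j) : ℂ) = (σ j : ℂ) := by
    intro j
    nth_rewrite 1 [hsum]
    rw [sum_inner]
    rw [Finset.sum_eq_single j]
    · rw [inner_smul_left, hw1, mul_one, Complex.conj_ofReal]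
    · intro i _ hij
      rw [inner_smul_left, hw0 i j hij, mul_zero]
    · intro hj
      exact absurd (Finset.mem_univ j) hj
  -- (F2) row expansion
  have hrow : ∀ j, (σ j : ℂ) = (Real.sqrt n : ℂ) * ∑ t, (starRingEnd ℂ) (c j t) := by
    intro j
    have h1 : (inner ℂ (w j) (cycTensor n) : ℂ) = (starRingEnd ℂ) ((σ j : ℝ) : ℂ) := by
      rw [← inner_conj_symm, hTw]
    rw [Complex.conj_ofReal] at h1
    rw [← h1]
    nth_rewrite 1 [cyc_eq_sum n]
    rw [inner_sum, Finset.mul_sum]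
    refine Finset.sum_congr rfl fun t _ => ?_
    rw [inner_smul_right, ← inner_conj_symm]
  -- (F3) σ j ≤ √n
  have hσle : ∀ j, σ j ≤ Real.sqrt n := by
    intro j
    have h1 := spec_bound' n (w j) (hpure j)
    rw [hwnorm j, mul_one, hTw j, Complex.norm_real, Real.norm_eq_abs,
      _root_.abs_of_pos (hpos j)] at h1
    exact h1
  -- bracket bounds
  have hbrW : ∀ t, ∑ j, ‖c j t‖ ≤ 1 := by
    intro t
    have := bracket_le_of_TOrtho w hortho (dftPure n t)
      (by rw [dftPure]; exact isPure3_pure3 _ _ _) (norm_dftPure n t)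
    calc ∑ j, ‖c j t‖ = ∑ j, ‖(inner ℂ (w j) (dftPure n t) : ℂ)‖ := by
          refine Finset.sum_congr rfl fun j _ => ?_
          rw [hc]
          rw [← inner_conj_symm, RCLike.norm_conj]
      _ ≤ 1 := this
  have hbrV : ∀ j, ∑ t, ‖c j t‖ ≤ 1 := by
    intro j
    exact bracket_le_of_TOrtho (dftPure n) (tortho_dftPure n) (w j) (hpure j) (hwnorm j)
  -- (F4)+(F5) key pointwise facts
  have hkey : ∀ j t, c j t ≠ 0 → σ j = Real.sqrt n ∧ Complex.re (c j t) = ‖c j t‖ := by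
    intro j t hne
    -- column equality analysis at t
    have hre : ∑ j, σ j * Complex.re (c j t) = Real.sqrt n := by
      have h0 := congrArg Complex.re (hcol t)
      rw [Complex.re_sum] at h0
      calc ∑ i, σ i * Complex.re (c i t) = ∑ i, Complex.re ((σ i : ℂ) * c i t) :=
            Finset.sum_congr rfl fun i _ => (Complex.re_ofReal_mul _ _).symm
        _ = Complex.re ((Real.sqrt n : ℝ) : ℂ) := h0
        _ = Real.sqrt n := Complex.ofReal_re _
    have hgb : ∀ i, σ i * Complex.re (c i t) ≤ Real.sqrt n * ‖c i t‖ := by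
      intro i
      calc σ i * Complex.re (c i t) ≤ σ i * ‖c i t‖ :=
            mul_le_mul_of_nonneg_left (Complex.re_le_norm _) (le_of_lt (hpos i))
        _ ≤ Real.sqrt n * ‖c i t‖ := mul_le_mul_of_nonneg_right (hσle i) (norm_nonneg _)
    have hub : ∑ i, Real.sqrt n * ‖c i t‖ ≤ Real.sqrt n := by
      rw [← Finset.mul_sum]
      calc Real.sqrt n * ∑ i, ‖c i t‖ ≤ Real.sqrt n * 1 :=
            mul_le_mul_of_nonneg_left (hbrW t) (Real.sqrt_nonneg _)
        _ = Real.sqrt n := mul_one _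
    have heq : ∀ i, σ i * Complex.re (c i t) = Real.sqrt n * ‖c i t‖ := by
      have hzero : ∑ i, (Real.sqrt n * ‖c i t‖ - σ i * Complex.re (c i t)) = 0 := by
        have hle : ∑ i, (Real.sqrt n * ‖c i t‖ - σ i * Complex.re (c i t)) ≤ 0 := by
          rw [Finset.sum_sub_distrib, hre]
          linarith
        have hge : 0 ≤ ∑ i, (Real.sqrt n * ‖c i t‖ - σ i * Complex.re (c i t)) :=
          Finset.sum_nonneg fun i _ => sub_nonneg.2 (hgb i)
        linarith
      intro i
      have := (Finset.sum_eq_zero_iff_of_nonneg (fun i _ => sub_nonneg.2 (hgb i))).1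
        hzero i (Finset.mem_univ i)
      linarith [sub_eq_zero.1 this]
    have hcpos : 0 < ‖c j t‖ := norm_pos_iff.2 hne
    have hσj : σ j = Real.sqrt n := by
      have h1 := heq j
      have hre_le : Complex.re (c j t) ≤ ‖c j t‖ := Complex.re_le_norm _
      have h3 : Real.sqrt n ≤ σ j := by nlinarith [hpos j]
      linarith [hσle j]
    refine ⟨hσj, ?_⟩
    have h1 := heq j
    rw [hσj] at h1
    exact mul_left_cancel₀ (ne_of_gt (sqrtn_pos n)) h1
  -- (F6) all σ j = √n
  have hσ : ∀ j, σ j = Real.sqrt n := by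
    intro j
    by_cases hex : ∃ t, c j t ≠ 0
    · obtain ⟨t, ht⟩ := hex
      exact (hkey j t ht).1
    · push_neg at hex
      exfalso
      have hz : ((σ j : ℝ) : ℂ) = 0 := by
        rw [hrow j, Finset.sum_eq_zero (fun t _ => by rw [hex t, map_zero]), mul_zero]
      exact (ne_of_gt (hpos j)) (Complex.ofReal_eq_zero.1 hz)
  -- (F7) row norm sums equal 1
  have hrowsum : ∀ j, ∑ t, ‖c j t‖ = 1 := by
    intro j
    have h1 : ∑ t, (starRingEnd ℂ) (c j t) = 1 := by
      have h2 := hrow j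
      rw [hσ j] at h2
      refine mul_left_cancel₀ (sqrtn_ne n) ?_
      rw [mul_one]
      exact h2.symm
    have h2 : ∑ t, Complex.re (c j t) = 1 := by
      calc ∑ t, Complex.re (c j t) = ∑ t, Complex.re ((starRingEnd ℂ) (c j t)) :=
            Finset.sum_congr rfl fun t _ => (Complex.conj_re _).symm
        _ = Complex.re (∑ t, (starRingEnd ℂ) (c j t)) := (Complex.re_sum _ _).symm
        _ = Complex.re 1 := by rw [h1]
        _ = 1 := Complex.one_re
    have h3 : (1:ℝ) ≤ ∑ t, ‖c j t‖ := by
      rw [← h2]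
      exact Finset.sum_le_sum fun t _ => Complex.re_le_norm _
    linarith [hbrV j]
  -- (F8) main: each w j is a dftPure
  have main : ∀ j, ∃ t₀, w j = dftPure n t₀ ∧ ∀ t, t ≠ t₀ → c j t = 0 := by
    intro j
    obtain ⟨a, b, cc, hw⟩ := isPure3_eq (hpure j)
    have hnorm1 : ‖ev a‖ * ‖ev b‖ * ‖ev cc‖ = 1 := by
      rw [← norm_pure3, ← hw, hwnorm j]
    have hsum1 : ∑ t, ‖(inner ℂ (dftPure n t) (pure3 a b cc) : ℂ)‖ = 1 := by
      rw [← hw]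
      exact hrowsum j
    obtain ⟨t₀, ht₀⟩ := key_eq n a b cc hnorm1 hsum1
    have hzero : ∀ t, t ≠ t₀ → c j t = 0 := by
      intro t ht
      show (inner ℂ (dftPure n t) (w j) : ℂ) = 0
      rw [hw]
      exact ht₀ t ht
    have hnorm_t₀ : ‖c j t₀‖ = 1 := by
      have := hrowsum j
      rw [Finset.sum_eq_single t₀ (fun t _ ht => by rw [hzero t ht, norm_zero])
        (fun ht => absurd (Finset.mem_univ t₀) ht)] at this
      exact this
    have hone : c j t₀ = 1 := by
      have hne : c j t₀ ≠ 0 := fun hh => by rw [hh, norm_zero] at hnorm_t₀; linarith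
      have hre := (hkey j t₀ hne).2
      rw [hnorm_t₀] at hre
      have habs : ‖c j t₀‖ = 1 := hnorm_t₀
      have him : Complex.im (c j t₀) = 0 := by
        have := Complex.sq_norm (c j t₀)
        rw [habs, Complex.normSq_apply, hre] at this
        nlinarith [sq_nonneg (Complex.im (c j t₀))]
      exact Complex.ext hre him
    refine ⟨t₀, ?_, hzero⟩
    have hdiff : ‖w j - dftPure n t₀‖ ^ 2 = 0 := by
      rw [@norm_sub_sq ℂ]
      rw [hwnorm j, norm_dftPure]
      have : (inner ℂ (w j) (dftPure n t₀) : ℂ) = 1 := by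
        rw [← inner_conj_symm]
        rw [show (inner ℂ (dftPure n t₀) (w j) : ℂ) = c j t₀ from rfl, hone, map_one]
      rw [this]
      norm_num
    have := norm_eq_zero.1 (pow_eq_zero_iff (n := 2) (by norm_num) |>.1 hdiff)
    exact (sub_eq_zero.1 this)
  set f : κ → ZMod n := fun j => Classical.choose (main j) with hf
  have hfspec : ∀ j, w j = dftPure n (f j) ∧ ∀ t, t ≠ f j → c j t = 0 :=
    fun j => Classical.choose_spec (main j)
  have hinj : Function.Injective f := by
    intro i j hij
    by_contra hne
    have h0 := hw0 i j hne
    have h1 : (inner ℂ (w i) (w j) : ℂ) = 1 := by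
      rw [(hfspec i).1, (hfspec j).1, hij]
      exact inner_self_one (T := dftPure n (f j)) (by rw [← (hfspec j).1, hwnorm j] )
    rw [h0] at h1
    exact zero_ne_one h1
  have hsurj : Function.Surjective f := by
    intro t
    have h1 := hcol t
    have h2 : ∃ j, c j t ≠ 0 := by
      by_contra hno
      push_neg at hno
      rw [Finset.sum_eq_zero (fun j _ => by rw [hno j, mul_zero])] at h1
      exact (sqrtn_ne n) h1.symm
    obtain ⟨j, hj⟩ := h2
    refine ⟨j, ?_⟩
    by_contra hne
    exact hj ((hfspec j).2 t (fun hh => hne hh.symm))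
  refine ⟨Equiv.ofBijective f ⟨hinj, hsurj⟩, fun j => ?_⟩
  have : Equiv.ofBijective f ⟨hinj, hsurj⟩ j = f j := rfl
  rw [this, hσ j, (hfspec j).1]

end CycAux

/-- **Theorem 1.12.** The discrete Fourier transform decomposition
`T_{C_n} = ∑_{t=0}^{n-1} √n (n^{-1/2} ∑ᵢ ζ^{t i} xⁱ) ⊗ (n^{-1/2} ∑ⱼ ζ^{t j} xʲ) ⊗ (n^{-1/2} ∑ₖ ζ^{t k} xᵏ)`
is the unique diagonal singular value decomposition of `T_{C_n}`; in particular the singular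
values of `T_{C_n}` are `√n` with multiplicity `n`, and `‖T_{C_n}‖⋆ = n√n`. -/
theorem cycTensor_dft_unique_DSVD (n : ℕ) [NeZero n] :
    IsDSVD3 (cycTensor n) (fun _ : ZMod n => Real.sqrt n) (dftPure n) ∧
    (∀ (κ : Type) (_ : Fintype κ) (σ : κ → ℝ) (w : κ → T3 (ZMod n) (ZMod n) (ZMod n)),
      IsDSVD3 (cycTensor n) σ w →
        ∃ e : κ ≃ ZMod n, ∀ j, (σ j : ℂ) • w j = (Real.sqrt n : ℂ) • dftPure n (e j)) ∧
    nuclearNorm3 (cycTensor n) = n * Real.sqrt n := by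
  refine ⟨CycAux.isDSVD_dft n, ?_, CycAux.nuclear_cyc n⟩
  intro κ inst σ w h
  exact @CycAux.unique_dsvd n _ κ inst σ w h
end
end
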